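/- For every positive integer M, every ε, ε' ∈ {0, 1/2}, every j, k ∈ ε' + ℤ, every τ in the upper half-plane, and all z₁, z₂, t ∈ ℂ such that the theta values in the denominators are nonzero: Ψ^{[M;ε]}_{j,k}(τ + 1, z₁, z₂, t) = e^{(2πi/M) j k} · Ψ^{[M;ε⊕ε']}_{j,k}(τ, z₁, z₂, t), where ε⊕ε' ∈ {0, 1/2} denotes ε + ε' reduced modulo 1. -/

import Mathlib

open Complex

/-- Jacobi theta function with characteristics `a b ∈ {0,1}` (allowing real characteristics):
`ϑ_{ab}(τ, z) = Σ_{n ∈ ℤ} exp(πi(n + a/2)²τ + 2πi(n + a/2)(z + b/2))`. -/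
noncomputable def jTheta (a b : ℝ) (τ z : ℂ) : ℂ :=
  ∑' n : ℤ, Complex.exp ((Real.pi : ℂ) * I * ((n : ℂ) + (a : ℂ) / 2) ^ 2 * τ +
    2 * (Real.pi : ℂ) * I * ((n : ℂ) + (a : ℂ) / 2) * (z + (b : ℂ) / 2))

/-- Dedekind eta function `η(τ) = e^{πiτ/12} Π_{n=1}^∞ (1 - q^n)`, `q = e^{2πiτ}`. -/
noncomputable def dedekindEta (τ : ℂ) : ℂ :=
  Complex.exp ((Real.pi : ℂ) * I * τ / 12) *
    ∏' n : ℕ, (1 - Complex.exp (2 * (Real.pi : ℂ) * I * τ) ^ (n + 1))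

/-- The function `Ψ^{[M;ε]}_{j,k}(τ, z₁, z₂, t)` (the paper's `Ψ^{[M,1,0;ε]}_{j,k;ε'}` in closed
form for `m = 1`):
`-i e^{-2πit/M} q^{jk/M} e^{(2πi/M)(k z₁ + j z₂)} η(Mτ)³ ϑ₁₁(Mτ, z₁+z₂+(j+k)τ) /
  (ϑ₁₁(Mτ, z₁+jτ+ε) ϑ₁₁(Mτ, z₂+kτ-ε))` where `q = e^{2πiτ}`. -/
noncomputable def Psi (M : ℕ) (ε j k : ℝ) (τ z₁ z₂ t : ℂ) : ℂ :=
  -I * Complex.exp (-(2 * (Real.pi : ℂ) * I * t) / (M : ℂ)) *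
    Complex.exp (2 * (Real.pi : ℂ) * I * τ * ((j : ℂ) * (k : ℂ) / (M : ℂ))) *
    Complex.exp (2 * (Real.pi : ℂ) * I / (M : ℂ) * ((k : ℂ) * z₁ + (j : ℂ) * z₂)) *
    (dedekindEta ((M : ℂ) * τ)) ^ 3 *
    jTheta 1 1 ((M : ℂ) * τ) (z₁ + z₂ + ((j : ℂ) + (k : ℂ)) * τ) /
    (jTheta 1 1 ((M : ℂ) * τ) (z₁ + (j : ℂ) * τ + (ε : ℂ)) *
     jTheta 1 1 ((M : ℂ) * τ) (z₂ + (k : ℂ) * τ - (ε : ℂ)))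

lemma jTheta11_tau_shift (m : ℤ) (σ z : ℂ) :
    jTheta 1 1 (σ + m) z =
      Complex.exp ((Real.pi : ℂ) * I * m / 4) * jTheta 1 1 σ z := by
  unfold jTheta
  rw [← tsum_mul_left]
  refine tsum_congr fun n => ?_
  obtain ⟨c, hc⟩ := Int.even_mul_succ_self n
  have hc' : (n : ℂ) * ((n : ℂ) + 1) = (c : ℂ) + (c : ℂ) := by exact_mod_cast hc
  rw [← Complex.exp_add, Complex.exp_eq_exp_iff_exists_int]
  exact ⟨m * c, by push_cast; linear_combination (Real.pi : ℂ) * I * (m : ℂ) * hc'⟩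

lemma jTheta11_z_shift (p : ℤ) (σ z : ℂ) :
    jTheta 1 1 σ (z + p) =
      Complex.exp ((Real.pi : ℂ) * I * p) * jTheta 1 1 σ z := by
  unfold jTheta
  rw [← tsum_mul_left]
  refine tsum_congr fun n => ?_
  rw [← Complex.exp_add, Complex.exp_eq_exp_iff_exists_int]
  exact ⟨n * p, by push_cast; ring⟩

lemma eta_shift (m : ℤ) (σ : ℂ) :
    dedekindEta (σ + m) = Complex.exp ((Real.pi : ℂ) * I * m / 12) * dedekindEta σ := by
  unfold dedekindEta
  have h1 : Complex.exp (2 * (Real.pi : ℂ) * I * (σ + m)) =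
      Complex.exp (2 * (Real.pi : ℂ) * I * σ) := by
    rw [Complex.exp_eq_exp_iff_exists_int]; exact ⟨m, by push_cast; ring⟩
  rw [h1, ← mul_assoc, ← Complex.exp_add]
  congr 2
  ring

/-- Modular T-transformation of `Ψ^{[M;ε]}_{j,k}` (Lemma 2.1(2) of the paper for `m = 1`);
`ε''` is `ε + ε'` reduced modulo `1`. -/
theorem Psi_T_transform (M : ℕ) (hM : 0 < M) (ε ε' ε'' : ℝ)
    (hε : ε = 0 ∨ ε = 1/2) (hε' : ε' = 0 ∨ ε' = 1/2)
    (hε'' : ε'' = 0 ∨ ε'' = 1/2) (hmod : ∃ n : ℤ, ε + ε' = ε'' + n)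
    (j k : ℝ) (hj : ∃ n : ℤ, j = ε' + n) (hk : ∃ n : ℤ, k = ε' + n)
    (τ : ℂ) (hτ : 0 < τ.im) (z₁ z₂ t : ℂ)
    (h1 : jTheta 1 1 ((M : ℂ) * (τ + 1)) (z₁ + (j : ℂ) * (τ + 1) + (ε : ℂ)) ≠ 0)
    (h2 : jTheta 1 1 ((M : ℂ) * (τ + 1)) (z₂ + (k : ℂ) * (τ + 1) - (ε : ℂ)) ≠ 0)
    (h3 : jTheta 1 1 ((M : ℂ) * τ) (z₁ + (j : ℂ) * τ + (ε'' : ℂ)) ≠ 0)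
    (h4 : jTheta 1 1 ((M : ℂ) * τ) (z₂ + (k : ℂ) * τ - (ε'' : ℂ)) ≠ 0) :
    Psi M ε j k (τ + 1) z₁ z₂ t =
      Complex.exp (2 * (Real.pi : ℂ) * I / (M : ℂ) * ((j : ℂ) * (k : ℂ))) *
        Psi M ε'' j k τ z₁ z₂ t := by
  obtain ⟨n₁, hj⟩ := hj
  obtain ⟨n₂, hk⟩ := hk
  obtain ⟨nm, hm⟩ := hmod
  obtain ⟨d, hd⟩ : ∃ d : ℤ, ε' + ε' = (d : ℝ) := by
    rcases hε' with h | h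
    exacts [⟨0, by norm_num [h]⟩, ⟨1, by norm_num [h]⟩]
  have hMne : (M : ℂ) ≠ 0 := Nat.cast_ne_zero.mpr hM.ne'
  -- integer shifts
  have hA : (j : ℂ) + (k : ℂ) = ((d + n₁ + n₂ : ℤ) : ℂ) := by
    have : j + k = ((d + n₁ + n₂ : ℤ) : ℝ) := by rw [hj, hk]; push_cast; linarith [hd]
    exact_mod_cast this
  have hB : (ε : ℂ) + (j : ℂ) = (ε'' : ℂ) + ((nm + n₁ : ℤ) : ℂ) := by
    have : ε + j = ε'' + ((nm + n₁ : ℤ) : ℝ) := by rw [hj]; push_cast; linarith [hm]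
    exact_mod_cast this
  have hC : (k : ℂ) - (ε : ℂ) = -(ε'' : ℂ) + ((d + n₂ - nm : ℤ) : ℂ) := by
    have : k - ε = -ε'' + ((d + n₂ - nm : ℤ) : ℝ) := by rw [hk]; push_cast; linarith [hm, hd]
    exact_mod_cast this
  have e1 : (M : ℂ) * (τ + 1) = (M : ℂ) * τ + ((M : ℤ) : ℂ) := by push_cast; ring
  have e2 : z₁ + z₂ + ((j : ℂ) + (k : ℂ)) * (τ + 1)
      = (z₁ + z₂ + ((j : ℂ) + (k : ℂ)) * τ) + ((d + n₁ + n₂ : ℤ) : ℂ) := by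
    linear_combination hA
  have e3 : z₁ + (j : ℂ) * (τ + 1) + (ε : ℂ)
      = (z₁ + (j : ℂ) * τ + (ε'' : ℂ)) + ((nm + n₁ : ℤ) : ℂ) := by
    linear_combination hB
  have e4 : z₂ + (k : ℂ) * (τ + 1) - (ε : ℂ)
      = (z₂ + (k : ℂ) * τ - (ε'' : ℂ)) + ((d + n₂ - nm : ℤ) : ℂ) := by
    linear_combination hC
  have e5 : Complex.exp (2 * (Real.pi : ℂ) * I * (τ + 1) * ((j : ℂ) * (k : ℂ) / (M : ℂ)))
      = Complex.exp (2 * (Real.pi : ℂ) * I / (M : ℂ) * ((j : ℂ) * (k : ℂ))) *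
        Complex.exp (2 * (Real.pi : ℂ) * I * τ * ((j : ℂ) * (k : ℂ) / (M : ℂ))) := by
    rw [← Complex.exp_add]
    congr 1
    field_simp
    ring
  simp only [Psi]
  rw [e1, e2, e3, e4, e5, jTheta11_tau_shift, jTheta11_tau_shift, jTheta11_tau_shift,
    jTheta11_z_shift, jTheta11_z_shift, jTheta11_z_shift, eta_shift]
  have key : Complex.exp ((Real.pi : ℂ) * I * (M : ℂ) / 12) ^ 3 *
      Complex.exp ((Real.pi : ℂ) * I * (M : ℂ) / 4) *
      Complex.exp ((Real.pi : ℂ) * I * ((d : ℂ) + (n₁ : ℂ) + (n₂ : ℂ))) =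
      Complex.exp ((Real.pi : ℂ) * I * (M : ℂ) / 4) *
      Complex.exp ((Real.pi : ℂ) * I * (M : ℂ) / 4) *
      (Complex.exp ((Real.pi : ℂ) * I * ((nm : ℂ) + (n₁ : ℂ))) *
       Complex.exp ((Real.pi : ℂ) * I * ((d : ℂ) + (n₂ : ℂ) - (nm : ℂ)))) := by
    rw [pow_succ, pow_succ, pow_one]
    simp only [← Complex.exp_add]
    congr 1
    ring
  field_simp [h3, h4]
  push_cast
  have key' : Complex.exp ((Real.pi : ℂ) * I * (M : ℂ) / 12) ^ 3 *
      Complex.exp ((Real.pi : ℂ) * I * ((d : ℂ) + (n₁ : ℂ) + (n₂ : ℂ))) =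
      Complex.exp ((Real.pi : ℂ) * I * (M : ℂ) / 4) *
      (Complex.exp ((Real.pi : ℂ) * I * ((nm : ℂ) + (n₁ : ℂ))) *
       Complex.exp ((Real.pi : ℂ) * I * ((d : ℂ) + (n₂ : ℂ) - (nm : ℂ)))) := by
    apply mul_left_cancel₀ (Complex.exp_ne_zero ((Real.pi : ℂ) * I * (M : ℂ) / 4))
    linear_combination key
  linear_combination (norm := ring_nf) -(dedekindEta ((M : ℂ) * τ)) ^ 3 *
    jTheta 1 1 ((M : ℂ) * τ) (z₁ + z₂ + ((j : ℂ) + (k : ℂ)) * τ) * key'
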